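/- arXiv:2405.17638 — 2 statements merged into one kernel-verified Lean document; each statement's English description precedes it below -/
import Mathlib

section
/- If n is odd and n ≥ 7, then the mean exit time from the middle state satisfies u((n+1)/2) ≥ (1/4)·e^{3(n−1)/(8π)}. -/
open Finset Filter
open scoped Real

noncomputable section

namespace RareChain

/-- The potential `w(i) = ((n-1)/(4π)) cos(4π(i-1)/(n-1))`. -/
def w (n i : ℕ) : ℝ :=
  ((n : ℝ) - 1) / (4 * Real.pi) * Real.cos (4 * Real.pi * ((i : ℝ) - 1) / ((n : ℝ) - 1))

/-- The normalizing constant `Z = ∑_{j=1}^n e^{w(j)}`. -/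
def Z (n : ℕ) : ℝ := ∑ j ∈ Finset.Icc 1 n, Real.exp (w n j)

/-- The invariant probability vector `p(i) = e^{w(i)} / Z`. -/
def p (n i : ℕ) : ℝ := Real.exp (w n i) / Z n

/-- The nearest-neighbor transition matrix of Section 3 of the paper (indices in `{1,…,n}`,
entries outside read as `0`). -/
def Pmat (n : ℕ) (i j : ℕ) : ℝ :=
  if i < 1 ∨ n < i ∨ j < 1 ∨ n < j then 0
  else if j = i + 1 then p n (i + 1) / (2 * (p n i + p n (i + 1)))
  else if j + 1 = i then p n (i - 1) / (2 * (p n i + p n (i - 1)))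
  else if j = i then
    1 - (if i + 1 ≤ n then p n (i + 1) / (2 * (p n i + p n (i + 1))) else 0)
      - (if 2 ≤ i then p n (i - 1) / (2 * (p n i + p n (i - 1))) else 0)
  else 0

lemma Z_pos {n : ℕ} (hn : 1 ≤ n) : 0 < Z n := by
  apply Finset.sum_pos (fun j _ => Real.exp_pos _)
  exact ⟨1, Finset.mem_Icc.mpr ⟨le_refl 1, hn⟩⟩

lemma p_pos {n : ℕ} (hn : 1 ≤ n) (i : ℕ) : 0 < p n i :=
  div_pos (Real.exp_pos _) (Z_pos hn)

/-- Edge conductances. -/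
def c (n i : ℕ) : ℝ := p n i * p n (i + 1) / (2 * (p n i + p n (i + 1)))

lemma c_pos {n : ℕ} (hn : 1 ≤ n) (i : ℕ) : 0 < c n i := by
  have h1 := p_pos hn i; have h2 := p_pos hn (i + 1)
  exact div_pos (mul_pos h1 h2) (by linarith)

/-- Effective resistance between `a` and `b`. -/
def R (n a b : ℕ) : ℝ := ∑ k ∈ Finset.Ico a b, 1 / c n k

lemma R_pos {n : ℕ} (hn : 1 ≤ n) {a b : ℕ} (hab : a < b) : 0 < R n a b := by
  apply Finset.sum_pos (fun k _ => one_div_pos.mpr (c_pos hn k))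
  exact ⟨a, Finset.mem_Ico.mpr ⟨le_refl a, hab⟩⟩

def A (n : ℕ) : ℝ := p n ((n + 1) / 2) * R n ((n + 1) / 2) n / R n 1 n
def B (n : ℕ) : ℝ := p n ((n + 1) / 2) * R n 1 ((n + 1) / 2) / R n 1 n

/-- The explicit subsolution (Green's function at the middle state). -/
def v (n i : ℕ) : ℝ := if i ≤ (n + 1) / 2 then A n * R n 1 i else B n * R n i n

lemma v_of_le {n i : ℕ} (h : i ≤ (n + 1) / 2) : v n i = A n * R n 1 i := if_pos h

lemma v_of_ge {n i : ℕ} (h : (n + 1) / 2 ≤ i) : v n i = B n * R n i n := by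
  unfold v
  split_ifs with h'
  · have : i = (n + 1) / 2 := le_antisymm h' h
    subst this
    unfold A B; ring
  · rfl

lemma R_split {n : ℕ} (hn : 7 ≤ n) : R n 1 n = R n 1 ((n + 1) / 2) + R n ((n + 1) / 2) n := by
  unfold R
  rw [Finset.sum_Ico_consecutive _ (by omega : 1 ≤ (n + 1) / 2) (by omega : (n + 1) / 2 ≤ n)]

lemma AB_sum {n : ℕ} (hn : 7 ≤ n) : A n + B n = p n ((n + 1) / 2) := by
  have h1 : 0 < R n 1 n := R_pos (by omega) (by omega)
  unfold A B
  rw [← add_div, ← mul_add, add_comm (R n ((n + 1) / 2) n), ← R_split hn,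
    mul_div_assoc, div_self h1.ne', mul_one]

lemma v_diff {n j : ℕ} (hn : 7 ≤ n) (hj : 1 ≤ j) (hjn : j < n) :
    v n (j + 1) - v n j = if j + 1 ≤ (n + 1) / 2 then A n / c n j else -(B n) / c n j := by
  by_cases h : j + 1 ≤ (n + 1) / 2
  · rw [if_pos h, v_of_le h, v_of_le (by omega)]
    unfold R
    rw [Finset.sum_Ico_succ_top (by omega : 1 ≤ j)]
    ring
  · rw [if_neg h, v_of_ge (by omega), v_of_ge (by omega : (n + 1) / 2 ≤ j)]
    unfold R
    rw [Finset.sum_eq_sum_Ico_succ_bot (by omega : j < n)]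
    ring

lemma Pmat_right {n k : ℕ} (hk : 1 ≤ k) (hkn : k + 2 ≤ n) :
    Pmat n (k + 1) (k + 2) = p n (k + 2) / (2 * (p n (k + 1) + p n (k + 2))) := by
  unfold Pmat
  rw [if_neg (by omega), if_pos rfl]

lemma Pmat_left {n k : ℕ} (hk : 1 ≤ k) (hkn : k + 2 ≤ n) :
    Pmat n (k + 1) k = p n k / (2 * (p n (k + 1) + p n k)) := by
  unfold Pmat
  rw [if_neg (by omega), if_neg (by omega), if_pos rfl]
  simp

lemma Pmat_diag {n k : ℕ} (hk : 1 ≤ k) (hkn : k + 2 ≤ n) :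
    Pmat n (k + 1) (k + 1) =
      1 - p n (k + 2) / (2 * (p n (k + 1) + p n (k + 2)))
        - p n k / (2 * (p n (k + 1) + p n k)) := by
  unfold Pmat
  rw [if_neg (by omega), if_neg (by omega), if_neg (by omega), if_pos rfl,
    if_pos (by omega), if_pos (by omega)]
  simp

lemma sum_three {n k : ℕ} (hk : 1 ≤ k) (hkn : k + 2 ≤ n) (f : ℕ → ℝ) :
    ∑ j ∈ Finset.Icc 1 n, Pmat n (k + 1) j * f j
      = Pmat n (k + 1) k * f k + Pmat n (k + 1) (k + 1) * f (k + 1)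
        + Pmat n (k + 1) (k + 2) * f (k + 2) := by
  have hsub : ({k, k + 1, k + 2} : Finset ℕ) ⊆ Finset.Icc 1 n := by
    intro x hx
    simp only [Finset.mem_insert, Finset.mem_singleton] at hx
    simp only [Finset.mem_Icc]
    omega
  rw [← Finset.sum_subset hsub ?_]
  · rw [show ({k, k + 1, k + 2} : Finset ℕ) = insert k (insert (k + 1) {k + 2}) from rfl,
      Finset.sum_insert (by simp), Finset.sum_insert (by simp), Finset.sum_singleton]
    ring
  · intro x hx hnx
    simp only [Finset.mem_Icc] at hx
    simp only [Finset.mem_insert, Finset.mem_singleton, not_or] at hnx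
    have h0 : Pmat n (k + 1) x = 0 := by
      unfold Pmat
      rw [if_neg (by omega), if_neg (by omega), if_neg (by omega), if_neg (by omega)]
    rw [h0, zero_mul]

/-- The subsolution property of `v`. -/
lemma v_subsolution {n k : ℕ} (hn : 7 ≤ n) (hk : 1 ≤ k) (hkn : k + 2 ≤ n) :
    v n (k + 1) ≤ 1 + ∑ j ∈ Finset.Icc 1 n, Pmat n (k + 1) j * v n j := by
  have hZ : (1:ℕ) ≤ n := by omega
  have hp0 := p_pos hZ k
  have hp1 := p_pos hZ (k + 1)
  have hp2 := p_pos hZ (k + 2)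
  have hc0 := c_pos hZ k
  have hc1 := c_pos hZ (k + 1)
  have hp0' := hp0.ne'
  have hp1' := hp1.ne'
  have hp2' := hp2.ne'
  have hc0' := hc0.ne'
  have hc1' := hc1.ne'
  rw [sum_three hk hkn, Pmat_left hk hkn, Pmat_right hk hkn, Pmat_diag hk hkn]
  have e12 : k + 1 + 1 = k + 2 := rfl
  have hq : p n (k + 2) / (2 * (p n (k + 1) + p n (k + 2))) = c n (k + 1) / p n (k + 1) := by
    unfold c
    simp only [e12]
    rw [eq_div_iff hp1']
    field_simp
  have hr : p n k / (2 * (p n (k + 1) + p n k)) = c n k / p n (k + 1) := by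
    unfold c
    rw [eq_div_iff hp1']
    field_simp
    ring
  have hd1' := v_diff hn (by omega : 1 ≤ k + 1) (by omega : k + 1 < n)
  rw [e12] at hd1'
  have hd0' := v_diff hn hk (by omega : k < n)
  rw [hq, hr]
  have key : -1 ≤ c n (k + 1) / p n (k + 1) * (v n (k + 2) - v n (k + 1))
      + c n k / p n (k + 1) * (v n k - v n (k + 1)) := by
    have hrw : v n k - v n (k + 1) = -(v n (k + 1) - v n k) := by ring
    rw [hd1', hrw, hd0']
    by_cases h2 : k + 2 ≤ (n + 1) / 2
    · rw [if_pos h2, if_pos (by omega)]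
      have : c n (k + 1) / p n (k + 1) * (A n / c n (k + 1))
          + c n k / p n (k + 1) * -(A n / c n k) = 0 := by
        field_simp
        ring
      rw [this]; norm_num
    · by_cases h1 : k + 1 ≤ (n + 1) / 2
      · rw [if_neg h2, if_pos h1]
        have hm : k + 1 = (n + 1) / 2 := by omega
        have hcomb : c n (k + 1) / p n (k + 1) * (-(B n) / c n (k + 1))
            + c n k / p n (k + 1) * -(A n / c n k) = -((A n + B n) / p n (k + 1)) := by
          field_simp
          ring
        rw [hcomb, hm, AB_sum hn, div_self (p_pos hZ _).ne']
      · rw [if_neg h2, if_neg h1]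
        have : c n (k + 1) / p n (k + 1) * (-(B n) / c n (k + 1))
            + c n k / p n (k + 1) * -(-(B n) / c n k) = 0 := by
          field_simp
          ring
        rw [this]; norm_num
  nlinarith [key]

lemma cos_le_neg_half {θ : ℝ} (h1 : 2 * Real.pi / 3 ≤ θ) (h2 : θ ≤ 4 * Real.pi / 3) :
    Real.cos θ ≤ -(1 / 2) := by
  have hπ := Real.pi_pos
  have h3 : Real.cos θ = -Real.cos (θ - Real.pi) := by
    rw [Real.cos_sub_pi]; ring_nf
  rw [h3]
  have h4 : Real.cos (Real.pi / 3) ≤ Real.cos |θ - Real.pi| := by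
    apply Real.cos_le_cos_of_nonneg_of_le_pi (abs_nonneg _) (by linarith)
    rw [abs_le]; constructor <;> linarith
  rw [Real.cos_abs, Real.cos_pi_div_three] at h4
  linarith

lemma one_div_c {n : ℕ} (hn : 1 ≤ n) (j : ℕ) :
    1 / c n j = 2 * Z n * (Real.exp (-(w n j)) + Real.exp (-(w n (j + 1)))) := by
  have hZ := (Z_pos hn).ne'
  unfold c p
  rw [Real.exp_neg, Real.exp_neg]
  have ha := (Real.exp_pos (w n j)).ne'
  have hb := (Real.exp_pos (w n (j + 1))).ne'
  field_simp
  ring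

lemma inv_c_ge {n : ℕ} (hn : 1 ≤ n) (j : ℕ) :
    2 * Z n * Real.exp (-(w n j)) ≤ 1 / c n j := by
  rw [one_div_c hn j]
  have h1 := Real.exp_pos (-(w n (j + 1)))
  have h2 := Z_pos hn
  nlinarith

lemma w_valley {n j : ℕ} (hn : 7 ≤ n)
    (h1 : ((n:ℝ) - 1) / 6 ≤ (j:ℝ) - 1) (h2 : (j:ℝ) - 1 ≤ ((n:ℝ) - 1) / 3) :
    w n j ≤ -(((n:ℝ) - 1) / (4 * Real.pi)) / 2 := by
  have hπ := Real.pi_pos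
  have hn1 : (0:ℝ) < (n:ℝ) - 1 := by
    have : (7:ℝ) ≤ (n:ℝ) := by exact_mod_cast hn
    linarith
  have hθ1 : 2 * Real.pi / 3 ≤ 4 * Real.pi * ((j:ℝ) - 1) / ((n:ℝ) - 1) := by
    rw [le_div_iff₀ hn1]
    nlinarith
  have hθ2 : 4 * Real.pi * ((j:ℝ) - 1) / ((n:ℝ) - 1) ≤ 4 * Real.pi / 3 := by
    rw [div_le_iff₀ hn1]
    nlinarith
  have hcos := cos_le_neg_half hθ1 hθ2
  unfold w
  have hC : 0 < ((n:ℝ) - 1) / (4 * Real.pi) := by positivity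
  nlinarith [mul_le_mul_of_nonneg_left hcos hC.le]

lemma w_valley' {n j : ℕ} (hn : 7 ≤ n)
    (h1 : 2 * ((n:ℝ) - 1) / 3 ≤ (j:ℝ) - 1) (h2 : (j:ℝ) - 1 ≤ 5 * ((n:ℝ) - 1) / 6) :
    w n j ≤ -(((n:ℝ) - 1) / (4 * Real.pi)) / 2 := by
  have hπ := Real.pi_pos
  have hn1 : (0:ℝ) < (n:ℝ) - 1 := by
    have : (7:ℝ) ≤ (n:ℝ) := by exact_mod_cast hn
    linarith
  have hθ1 : 2 * Real.pi / 3 ≤ 4 * Real.pi * ((j:ℝ) - 1) / ((n:ℝ) - 1) - 2 * Real.pi := by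
    have : 2 * Real.pi / 3 + 2 * Real.pi ≤ 4 * Real.pi * ((j:ℝ) - 1) / ((n:ℝ) - 1) := by
      rw [le_div_iff₀ hn1]
      nlinarith
    linarith
  have hθ2 : 4 * Real.pi * ((j:ℝ) - 1) / ((n:ℝ) - 1) - 2 * Real.pi ≤ 4 * Real.pi / 3 := by
    have : 4 * Real.pi * ((j:ℝ) - 1) / ((n:ℝ) - 1) ≤ 4 * Real.pi / 3 + 2 * Real.pi := by
      rw [div_le_iff₀ hn1]
      nlinarith
    linarith
  have hcos := cos_le_neg_half hθ1 hθ2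
  rw [Real.cos_sub_two_pi] at hcos
  unfold w
  have hC : 0 < ((n:ℝ) - 1) / (4 * Real.pi) := by positivity
  nlinarith [mul_le_mul_of_nonneg_left hcos hC.le]

set_option maxHeartbeats 2000000 in
/-- Eq. (7) of the paper: for odd `n ≥ 7`, the mean exit time from the middle
state satisfies `u((n+1)/2) ≥ (1/4) e^{3(n-1)/(8π)}`. -/
theorem stmt18 (n : ℕ) (hodd : Odd n) (hn : 7 ≤ n) (u : ℕ → ℝ)
    (hu1 : u 1 = 0) (hun : u n = 0)
    (hharm : ∀ i, 2 ≤ i → i ≤ n - 1 →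
      u i = 1 + ∑ j ∈ Finset.Icc 1 n, Pmat n i j * u j) :
    (1 / 4 : ℝ) * Real.exp (3 * ((n : ℝ) - 1) / (8 * Real.pi)) ≤ u ((n + 1) / 2) := by
  classical
  have hn1 : (1:ℕ) ≤ n := by omega
  set m := (n + 1) / 2 with hm
  have hm2 : 2 ≤ m := by omega
  have hmn : m + 1 ≤ n := by omega
  -- Step 1: maximum principle, v ≤ u on [1, n].
  have hvu : ∀ i ∈ Finset.Icc 1 n, v n i - u i ≤ 0 := by
    by_contra hcon
    push_neg at hcon
    set g : ℕ → ℝ := fun i => v n i - u i with hg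
    have hT : (Finset.Icc 1 n).Nonempty := ⟨1, Finset.mem_Icc.mpr ⟨le_refl 1, hn1⟩⟩
    obtain ⟨i0, hi0T, hi0max⟩ := Finset.exists_max_image (Finset.Icc 1 n) g hT
    obtain ⟨iw, hiwT, hiw⟩ := hcon
    have hi0pos : 0 < g i0 := lt_of_lt_of_le hiw (hi0max iw hiwT)
    set S := (Finset.Icc 1 n).filter (fun j => g i0 ≤ g j) with hS
    have hSne : S.Nonempty := ⟨i0, Finset.mem_filter.mpr ⟨hi0T, le_refl _⟩⟩
    set i1 := S.min' hSne with hi1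
    have hi1S : i1 ∈ S := Finset.min'_mem S hSne
    have hi1T : i1 ∈ Finset.Icc 1 n := (Finset.mem_filter.mp hi1S).1
    have hi1max : ∀ j ∈ Finset.Icc 1 n, g j ≤ g i1 :=
      fun j hj => le_trans (hi0max j hj) (Finset.mem_filter.mp hi1S).2
    have hi1pos : 0 < g i1 := lt_of_lt_of_le hi0pos (Finset.mem_filter.mp hi1S).2
    have hi1lt : ∀ j ∈ Finset.Icc 1 n, j < i1 → g j < g i1 := by
      intro j hj hjlt
      rcases lt_or_ge (g j) (g i1) with h | h
      · exact h
      · exfalso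
        have hjS : j ∈ S := Finset.mem_filter.mpr ⟨hj, le_trans (Finset.mem_filter.mp hi1S).2 h⟩
        have hle := Finset.min'_le S j hjS
        rw [← hi1] at hle
        omega
    have hv1 : v n 1 = 0 := by
      rw [v_of_le (by omega : 1 ≤ (n + 1) / 2)]
      unfold R
      simp
    have hvn : v n n = 0 := by
      rw [v_of_ge (by omega : (n + 1) / 2 ≤ n)]
      unfold R
      simp
    have hg1 : g 1 = 0 := by simp only [hg]; rw [hv1, hu1]; ring
    have hgn : g n = 0 := by simp only [hg]; rw [hvn, hun]; ring
    have hi1b : 2 ≤ i1 ∧ i1 + 1 ≤ n := by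
      rw [Finset.mem_Icc] at hi1T
      constructor
      · rcases Nat.lt_or_ge i1 2 with h | h
        · exfalso
          have h1 : i1 = 1 := by omega
          rw [h1, hg1] at hi1pos
          exact lt_irrefl 0 hi1pos
        · exact h
      · rcases Nat.lt_or_ge i1 n with h | h
        · omega
        · exfalso
          have h1 : i1 = n := by omega
          rw [h1, hgn] at hi1pos
          exact lt_irrefl 0 hi1pos
    obtain ⟨k, hk⟩ : ∃ k, i1 = k + 1 := ⟨i1 - 1, by omega⟩
    have hk1 : 1 ≤ k := by omega
    have hk2 : k + 2 ≤ n := by omega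
    have huh := hharm (k + 1) (by omega) (by omega)
    have hvs := v_subsolution hn hk1 hk2
    have hgs : g (k + 1) ≤ ∑ j ∈ Finset.Icc 1 n, Pmat n (k + 1) j * g j := by
      have hsplit : ∑ j ∈ Finset.Icc 1 n, Pmat n (k + 1) j * g j
          = ∑ j ∈ Finset.Icc 1 n, Pmat n (k + 1) j * v n j
            - ∑ j ∈ Finset.Icc 1 n, Pmat n (k + 1) j * u j := by
        rw [← Finset.sum_sub_distrib]
        apply Finset.sum_congr rfl
        intro j _
        simp only [hg]
        ring
      rw [hsplit]
      simp only [hg]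
      linarith [hvs, huh.le]
    rw [sum_three hk1 hk2, Pmat_left hk1 hk2, Pmat_right hk1 hk2, Pmat_diag hk1 hk2] at hgs
    have hp0 := p_pos hn1 k
    have hp1 := p_pos hn1 (k + 1)
    have hp2 := p_pos hn1 (k + 2)
    have hqpos : 0 < p n (k + 2) / (2 * (p n (k + 1) + p n (k + 2))) :=
      div_pos hp2 (by linarith)
    have hrpos : 0 < p n k / (2 * (p n (k + 1) + p n k)) :=
      div_pos hp0 (by linarith)
    have hgk : g k < g (k + 1) := by
      rw [hk] at hi1lt
      exact hi1lt k (Finset.mem_Icc.mpr ⟨by omega, by omega⟩) (by omega)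
    have hgk2 : g (k + 2) ≤ g (k + 1) := by
      rw [hk] at hi1max
      exact hi1max (k + 2) (Finset.mem_Icc.mpr ⟨by omega, by omega⟩)
    nlinarith [mul_lt_mul_of_pos_left hgk hrpos, mul_le_mul_of_nonneg_left hgk2 hqpos.le]
  -- Step 2: lower bound on v m.
  have hum : v n m ≤ u m := by
    have := hvu m (Finset.mem_Icc.mpr ⟨by omega, by omega⟩)
    linarith
  have hZ := Z_pos hn1
  have hZ' := hZ.ne'
  have hπ := Real.pi_pos
  have hπ' := Real.pi_ne_zero
  have hnR : (7:ℝ) ≤ (n:ℝ) := by exact_mod_cast hn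
  set C := ((n:ℝ) - 1) / (4 * Real.pi) with hC
  have hCpos : 0 < C := by
    rw [hC]
    apply div_pos (by linarith) (by linarith)
  set L := 2 * Z n * Real.exp (C / 2) with hL
  have hLpos : 0 < L := by
    rw [hL]
    exact mul_pos (mul_pos two_pos hZ) (Real.exp_pos _)
  -- middle value of w
  have hwm : w n m = C := by
    have h2m : 2 * m = n + 1 := by obtain ⟨t, ht⟩ := hodd; omega
    have h2mR : 2 * (m:ℝ) = (n:ℝ) + 1 := by exact_mod_cast h2m
    unfold w
    have harg : 4 * Real.pi * ((m:ℝ) - 1) / ((n:ℝ) - 1) = 2 * Real.pi := by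
      rw [div_eq_iff (by linarith : ((n:ℝ) - 1) ≠ 0)]
      linear_combination (2 * Real.pi) * h2mR
    rw [harg, Real.cos_two_pi, mul_one, hC]
  -- left valley index
  have hwL : ∃ jL, 1 ≤ jL ∧ jL < m ∧ w n jL ≤ -C / 2 := by
    refine ⟨1 + (n + 4) / 6, by omega, by omega, ?_⟩
    have h6a : n ≤ 6 * ((n + 4) / 6) + 1 := by omega
    have h3a : 3 * ((n + 4) / 6) + 1 ≤ n := by omega
    have h6aR : (n:ℝ) ≤ 6 * (((n + 4) / 6 : ℕ):ℝ) + 1 := by exact_mod_cast h6a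
    have h3aR : 3 * (((n + 4) / 6 : ℕ):ℝ) + 1 ≤ (n:ℝ) := by exact_mod_cast h3a
    rw [hC]
    apply w_valley hn
    · push_cast
      linarith
    · push_cast
      linarith
  -- right valley index
  have hwR : ∃ jR, m ≤ jR ∧ jR < n ∧ w n jR ≤ -C / 2 := by
    refine ⟨1 + 2 * n / 3, by omega, by omega, ?_⟩
    have h1 : 2 * n ≤ 3 * (2 * n / 3) + 2 := by omega
    have h2 : 6 * (2 * n / 3) + 5 ≤ 5 * n := by omega
    have h1R : 2 * (n:ℝ) ≤ 3 * (((2 * n / 3 : ℕ)):ℝ) + 2 := by exact_mod_cast h1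
    have h2R : 6 * (((2 * n / 3 : ℕ)):ℝ) + 5 ≤ 5 * (n:ℝ) := by exact_mod_cast h2
    rw [hC]
    apply w_valley' hn
    · push_cast
      linarith
    · push_cast
      linarith
  obtain ⟨jL, hjL1, hjLm, hjLw⟩ := hwL
  obtain ⟨jR, hjRm, hjRn, hjRw⟩ := hwR
  -- resistances are large
  have hRL : L ≤ R n 1 m := by
    have h1 := inv_c_ge hn1 jL
    have h2 : Real.exp (C / 2) ≤ Real.exp (-(w n jL)) := Real.exp_le_exp.mpr (by linarith)
    have h3 : 1 / c n jL ≤ R n 1 m :=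
      Finset.single_le_sum (f := fun k => 1 / c n k)
        (fun k _ => (one_div_pos.mpr (c_pos hn1 k)).le)
        (Finset.mem_Ico.mpr ⟨hjL1, hjLm⟩)
    rw [hL]
    nlinarith
  have hRR : L ≤ R n m n := by
    have h1 := inv_c_ge hn1 jR
    have h2 : Real.exp (C / 2) ≤ Real.exp (-(w n jR)) := Real.exp_le_exp.mpr (by linarith)
    have h3 : 1 / c n jR ≤ R n m n :=
      Finset.single_le_sum (f := fun k => 1 / c n k)
        (fun k _ => (one_div_pos.mpr (c_pos hn1 k)).le)
        (Finset.mem_Ico.mpr ⟨hjRm, hjRn⟩)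
    rw [hL]
    nlinarith
  -- lower bound on v m
  have hvm : Real.exp (C + C / 2) ≤ v n m := by
    rw [v_of_le (le_refl m)]
    have hx := hRL
    have hy := hRR
    have hx0 : 0 < R n 1 m := lt_of_lt_of_le hLpos hx
    have hy0 : 0 < R n m n := lt_of_lt_of_le hLpos hy
    have hxy : R n 1 n = R n 1 m + R n m n := R_split hn
    have hpm : p n m = Real.exp C / Z n := by unfold p; rw [hwm]
    have hfrac : L / 2 ≤ R n m n * R n 1 m / (R n 1 m + R n m n) := by
      rw [le_div_iff₀ (by linarith)]
      nlinarith [mul_nonneg (sub_nonneg.mpr hx) (sub_nonneg.mpr hy),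
        mul_le_mul hx hy hLpos.le hx0.le]
    unfold A
    rw [← hm, hxy, hpm]
    calc Real.exp (C + C / 2) = Real.exp C / Z n * (L / 2) := by
          rw [hL, Real.exp_add]
          field_simp
      _ ≤ Real.exp C / Z n * (R n m n * R n 1 m / (R n 1 m + R n m n)) :=
          mul_le_mul_of_nonneg_left hfrac (le_of_lt (div_pos (Real.exp_pos C) hZ))
      _ = Real.exp C / Z n * R n m n / (R n 1 m + R n m n) * R n 1 m := by ring
  calc (1 / 4 : ℝ) * Real.exp (3 * ((n : ℝ) - 1) / (8 * Real.pi))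
      ≤ Real.exp (3 * ((n : ℝ) - 1) / (8 * Real.pi)) := by
        nlinarith [Real.exp_pos (3 * ((n : ℝ) - 1) / (8 * Real.pi))]
    _ = Real.exp (C + C / 2) := by
        rw [hC]
        congr 1
        field_simp
        ring
    _ ≤ v n m := hvm
    _ ≤ u m := hum

end RareChain
end
end

section
/- The smallest eigenvalue satisfies limsup_{n→∞} λ_min(Ŝ^{(n)}) ≤ 0.64; consequently, liminf_{n→∞} ‖I − Ŝ^{(n)}‖₂ ≥ 0.36. -/
open Finset Filter
open scoped Real

noncomputable section

namespace RareChain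

/-- The interior submatrix `Ŝ^{(n)}(i,j) = P(i+1, j+1)`, `1 ≤ i,j ≤ n-2`. -/
def Shat (n : ℕ) : Matrix (Fin (n - 2)) (Fin (n - 2)) ℝ :=
  fun i j => Pmat n ((i : ℕ) + 2) ((j : ℕ) + 2)


lemma ratio_nonneg {x y : ℝ} (hx : 0 < x) (hy : 0 < y) : 0 ≤ y / (2 * (x + y)) := by
  apply div_nonneg hy.le; linarith

lemma ratio_le_half {x y : ℝ} (hx : 0 < x) (hy : 0 < y) : y / (2 * (x + y)) ≤ 1/2 := by
  rw [div_le_iff₀ (by linarith)]; linarith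

lemma ratio_up {x y : ℝ} : y / (2 * (x + y)) = (y / (x + y)) / 2 := by
  rw [div_div, mul_comm]

lemma ratio_eq {x y : ℝ} (hxy : x + y ≠ 0) : x / (2 * (y + x)) = (1 - y / (x + y)) / 2 := by
  have h : 1 - y / (x + y) = x / (x + y) := by field_simp; ring
  rw [h, add_comm y x, div_div, mul_comm]


lemma Pmat_bounds {n : ℕ} (hn : 1 ≤ n) (a b : ℕ) : 0 ≤ Pmat n a b ∧ Pmat n a b ≤ 1 := by
  have P := p_pos hn
  unfold Pmat
  split_ifs <;> constructor <;>
    linarith [ratio_nonneg (P a) (P (a+1)), ratio_le_half (P a) (P (a+1)),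
      ratio_nonneg (P a) (P (a-1)), ratio_le_half (P a) (P (a-1))]

/-- detailed balance -/
lemma db {n : ℕ} (hn : 1 ≤ n) (a b : ℕ) :
    p n a * Pmat n a b = p n b * Pmat n b a := by
  have P := p_pos hn
  by_cases hb : b = a + 1
  · subst hb
    by_cases hr : a < 1 ∨ n < a + 1
    · have e1 : Pmat n a (a+1) = 0 := by unfold Pmat; rw [if_pos (by omega)]
      have e2 : Pmat n (a+1) a = 0 := by unfold Pmat; rw [if_pos (by omega)]
      rw [e1, e2]; ring
    · have e1 : Pmat n a (a+1) = p n (a+1) / (2 * (p n a + p n (a+1))) := by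
        unfold Pmat; rw [if_neg (by omega), if_pos rfl]
      have e2 : Pmat n (a+1) a = p n a / (2 * (p n (a+1) + p n a)) := by
        unfold Pmat
        rw [if_neg (by omega), if_neg (by omega), if_pos (by omega)]
        simp only [Nat.add_sub_cancel]
      rw [e1, e2, add_comm (p n (a+1)) (p n a)]; ring
  · by_cases ha : a = b + 1
    · subst ha
      by_cases hr : b < 1 ∨ n < b + 1
      · have e1 : Pmat n (b+1) b = 0 := by unfold Pmat; rw [if_pos (by omega)]
        have e2 : Pmat n b (b+1) = 0 := by unfold Pmat; rw [if_pos (by omega)]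
        rw [e1, e2]; ring
      · have e1 : Pmat n (b+1) b = p n b / (2 * (p n (b+1) + p n b)) := by
          unfold Pmat
          rw [if_neg (by omega), if_neg (by omega), if_pos (by omega)]
          simp only [Nat.add_sub_cancel]
        have e2 : Pmat n b (b+1) = p n (b+1) / (2 * (p n b + p n (b+1))) := by
          unfold Pmat; rw [if_neg (by omega), if_pos rfl]
        rw [e1, e2, add_comm (p n (b+1)) (p n b)]; ring
    · by_cases hd : b = a
      · subst hd; ring
      · have e1 : Pmat n a b = 0 := by
          unfold Pmat; split_ifs <;> first | rfl | omega
        have e2 : Pmat n b a = 0 := by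
          unfold Pmat; split_ifs <;> first | rfl | omega
        rw [e1, e2]; ring

def g (n a : ℕ) : ℝ := p n (a+1) / (p n a + p n (a+1))

lemma g_mem {n : ℕ} (hn : 1 ≤ n) (a : ℕ) : 0 ≤ g n a ∧ g n a ≤ 1 := by
  have P := p_pos hn
  have hs : 0 < p n a + p n (a+1) := by linarith [P a, P (a+1)]
  constructor
  · exact div_nonneg (P (a+1)).le hs.le
  · rw [g, div_le_one hs]; linarith [P a]

lemma Pmat_up {n : ℕ} (a : ℕ) (ha : 1 ≤ a) (ha2 : a + 1 ≤ n) :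
    Pmat n a (a+1) = g n a / 2 := by
  unfold Pmat
  rw [if_neg (by omega), if_pos rfl, ratio_up, g]

lemma Pmat_down {n : ℕ} (a : ℕ) (ha : 2 ≤ a) (ha2 : a ≤ n) :
    Pmat n a (a-1) = (1 - g n (a-1)) / 2 := by
  have P := p_pos (by omega : 1 ≤ n)
  have hs : a - 1 + 1 = a := by omega
  unfold Pmat
  rw [if_neg (by omega), if_neg (by omega), if_pos (by omega),
    ratio_eq (by have := P (a-1); have := P a; intro h; linarith), g, hs]

lemma Pmat_diag_s19 {n : ℕ} (a : ℕ) (ha : 2 ≤ a) (ha2 : a + 1 ≤ n) :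
    Pmat n a a = 1/2 + (g n (a-1) - g n a) / 2 := by
  have P := p_pos (by omega : 1 ≤ n)
  have hs : a - 1 + 1 = a := by omega
  unfold Pmat
  rw [if_neg (by omega), if_neg (by omega), if_neg (by omega), if_pos rfl,
    if_pos (by omega), if_pos (by omega), ratio_up,
    ratio_eq (by have := P (a-1); have := P a; intro h; linarith)]
  simp only [g, hs]
  ring


/-- single-diagonal matrix along an injective map -/
def M {d : ℕ} (σ : Fin d → Fin d) (v : Fin d → ℝ) : Matrix (Fin d) (Fin d) ℝ :=
  Matrix.of fun i j => if j = σ i then v i else 0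

lemma M_mulVec {d : ℕ} (σ : Fin d → Fin d) (v : Fin d → ℝ) (x : Fin d → ℝ) (i : Fin d) :
    (Matrix.mulVec (M σ v) x) i = v i * x (σ i) := by
  simp only [M, Matrix.mulVec, dotProduct, Matrix.of_apply, ite_mul, zero_mul]
  rw [Finset.sum_ite_eq' Finset.univ (σ i) (fun j => v i * x j)]
  simp

lemma normlem {d : ℕ} (σ : Fin d → Fin d) (hσ : Function.Injective σ) (v : Fin d → ℝ)
    {c : ℝ} (hc : 0 ≤ c) (hv : ∀ i, |v i| ≤ c) :
    ‖Matrix.toEuclideanCLM (𝕜 := ℝ) (M σ v)‖ ≤ c := by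
  refine ContinuousLinearMap.opNorm_le_bound _ hc (fun x => ?_)
  have hco : ∀ i : Fin d, (Matrix.toEuclideanCLM (𝕜 := ℝ) (M σ v) x) i = v i * x (σ i) := by
    intro i
    have h := congrFun (Matrix.ofLp_toEuclideanCLM (𝕜 := ℝ) (M σ v) x) i
    simpa [M_mulVec] using h
  rw [EuclideanSpace.norm_eq, EuclideanSpace.norm_eq]
  have hb : ∑ i : Fin d, ‖(Matrix.toEuclideanCLM (𝕜 := ℝ) (M σ v) x) i‖ ^ 2
      ≤ c ^ 2 * ∑ i : Fin d, ‖x i‖ ^ 2 := by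
    have step1 : ∑ i : Fin d, ‖(Matrix.toEuclideanCLM (𝕜 := ℝ) (M σ v) x) i‖ ^ 2
        ≤ c ^ 2 * ∑ i : Fin d, ‖x (σ i)‖ ^ 2 := by
      rw [Finset.mul_sum]
      refine Finset.sum_le_sum (fun i _ => ?_)
      rw [hco i]
      have h1 : ‖v i * x (σ i)‖ ^ 2 = (v i)^2 * ‖x (σ i)‖^2 := by
        rw [norm_mul, mul_pow]; rw [Real.norm_eq_abs (v i), sq_abs]
      rw [h1]
      have h2 : (v i)^2 ≤ c^2 := by
        have := hv i
        nlinarith [abs_nonneg (v i), sq_abs (v i)]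
      nlinarith [sq_nonneg (‖x (σ i)‖)]
    have step2 : ∑ i : Fin d, ‖x (σ i)‖ ^ 2 ≤ ∑ i : Fin d, ‖x i‖ ^ 2 := by
      have him : ∑ i : Fin d, ‖x (σ i)‖ ^ 2
          = ∑ j ∈ Finset.univ.image σ, ‖x j‖ ^ 2 :=
        (Finset.sum_image (s := Finset.univ) (f := fun j => ‖x j‖ ^ 2) (g := σ)
          (fun a _ b _ h => hσ h)).symm
      rw [him]
      exact Finset.sum_le_sum_of_subset_of_nonneg (Finset.subset_univ _)
        (fun _ _ _ => by positivity)
    calc _ ≤ c ^ 2 * ∑ i : Fin d, ‖x (σ i)‖ ^ 2 := step1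
      _ ≤ c ^ 2 * ∑ i : Fin d, ‖x i‖ ^ 2 := by nlinarith [sq_nonneg c]
  calc Real.sqrt (∑ i : Fin d, ‖(Matrix.toEuclideanCLM (𝕜 := ℝ) (M σ v) x) i‖ ^ 2)
      ≤ Real.sqrt (c ^ 2 * ∑ i : Fin d, ‖x i‖ ^ 2) := Real.sqrt_le_sqrt hb
    _ = c * Real.sqrt (∑ i : Fin d, ‖x i‖ ^ 2) := by
        rw [Real.sqrt_mul (sq_nonneg c), Real.sqrt_sq hc]

def sp (d : ℕ) : Fin d → Fin d := fun i =>
  if h : (i : ℕ) + 1 < d then ⟨(i : ℕ) + 1, h⟩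
  else ⟨0, Nat.lt_of_le_of_lt (Nat.zero_le _) i.isLt⟩

def sm (d : ℕ) : Fin d → Fin d := fun i =>
  if h : 1 ≤ (i : ℕ) then ⟨(i : ℕ) - 1, Nat.lt_of_le_of_lt (Nat.sub_le _ _) i.isLt⟩
  else ⟨d - 1, by have := i.isLt; omega⟩

lemma sp_inj (d : ℕ) : Function.Injective (sp d) := by
  intro a b h
  have ha := a.isLt; have hb := b.isLt
  unfold sp at h
  rw [Fin.ext_iff] at h ⊢
  split_ifs at h <;> simp only [Fin.val_mk] at h <;> omega

lemma sm_inj (d : ℕ) : Function.Injective (sm d) := by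
  intro a b h
  have ha := a.isLt; have hb := b.isLt
  unfold sm at h
  rw [Fin.ext_iff] at h ⊢
  split_ifs at h <;> simp only [Fin.val_mk] at h <;> omega

lemma sp_ne {d : ℕ} (hd : 3 ≤ d) (i : Fin d) : sp d i ≠ i := by
  have ha := i.isLt
  rw [Ne, Fin.ext_iff]
  unfold sp
  split_ifs <;> simp only [Fin.val_mk] <;> omega

lemma sm_ne {d : ℕ} (hd : 3 ≤ d) (i : Fin d) : sm d i ≠ i := by
  have ha := i.isLt
  rw [Ne, Fin.ext_iff]
  unfold sm
  split_ifs <;> simp only [Fin.val_mk] <;> omega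

lemma sp_ne_sm {d : ℕ} (hd : 3 ≤ d) (i : Fin d) : sp d i ≠ sm d i := by
  have ha := i.isLt
  rw [Ne, Fin.ext_iff]
  unfold sp sm
  split_ifs <;> simp only [Fin.val_mk] <;> omega

lemma decomp {n : ℕ} (hn : 6 ≤ n) :
    Shat n = M id (fun i => Shat n i i)
      + M (sp (n-2)) (fun i => Shat n i (sp (n-2) i))
      + M (sm (n-2)) (fun i => Shat n i (sm (n-2) i)) := by
  have hd : 4 ≤ n - 2 := by omega
  ext i j
  simp only [Matrix.add_apply, M, Matrix.of_apply, id_eq]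
  by_cases h0 : j = i
  · subst h0
    rw [if_pos rfl, if_neg (Ne.symm (sp_ne (by omega) j)),
      if_neg (Ne.symm (sm_ne (by omega) j))]
    ring
  · rw [if_neg h0]
    by_cases hp : j = sp (n-2) i
    · subst hp
      rw [if_pos rfl, if_neg (sp_ne_sm (by omega) i)]
      ring
    · rw [if_neg hp]
      by_cases hm : j = sm (n-2) i
      · subst hm
        rw [if_pos rfl]
        ring
      · rw [if_neg hm]
        have hji : (j : ℕ) ≠ (i : ℕ) := fun h => h0 (Fin.ext h)
        have hj1 : (j : ℕ) ≠ (i : ℕ) + 1 := by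
          intro h
          apply hp
          have hlt : (i : ℕ) + 1 < n - 2 := h ▸ j.isLt
          apply Fin.ext
          simp only [sp, dif_pos hlt, Fin.val_mk, h]
        have hi1 : (i : ℕ) ≠ (j : ℕ) + 1 := by
          intro h
          apply hm
          have h1 : 1 ≤ (i : ℕ) := by omega
          apply Fin.ext
          simp only [sm, dif_pos h1, Fin.val_mk]
          omega
        have hz : Shat n i j = 0 := by
          unfold Shat Pmat
          split_ifs <;> first | rfl | omega
        rw [hz]; ring

lemma Shat_abs_le {n : ℕ} (hn : 6 ≤ n) (i j : Fin (n-2)) : |Shat n i j| ≤ 1 := by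
  have h := Pmat_bounds (by omega : 1 ≤ n) ((i : ℕ) + 2) ((j : ℕ) + 2)
  rw [Shat, abs_le]
  exact ⟨by linarith [h.1], h.2⟩

lemma normShat {n : ℕ} (hn : 6 ≤ n) : ‖Matrix.toEuclideanCLM (𝕜 := ℝ) (Shat n)‖ ≤ 3 := by
  rw [decomp hn, map_add, map_add]
  have b0 := normlem id Function.injective_id (fun i => Shat n i i) zero_le_one
    (fun i => Shat_abs_le hn i i)
  have bp := normlem (sp (n-2)) (sp_inj _) _ zero_le_one
    (fun i => Shat_abs_le hn i (sp (n-2) i))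
  have bm := normlem (sm (n-2)) (sm_inj _) _ zero_le_one
    (fun i => Shat_abs_le hn i (sm (n-2) i))
  calc ‖_ + _ + _‖ ≤ ‖_ + _‖ + ‖_‖ := norm_add_le _ _
    _ ≤ ‖_‖ + ‖_‖ + ‖_‖ := by gcongr; exact norm_add_le _ _
    _ ≤ 1 + 1 + 1 := by gcongr
    _ = 3 := by norm_num

lemma normOneSub {n : ℕ} (hn : 6 ≤ n) :
    ‖Matrix.toEuclideanCLM (𝕜 := ℝ)
      ((1 : Matrix (Fin (n-2)) (Fin (n-2)) ℝ) - Shat n)‖ ≤ 4 := by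
  rw [map_sub, map_one]
  calc ‖_ - _‖ ≤ ‖(1 : EuclideanSpace ℝ (Fin (n-2)) →L[ℝ] EuclideanSpace ℝ (Fin (n-2)))‖
      + ‖Matrix.toEuclideanCLM (𝕜 := ℝ) (Shat n)‖ := norm_sub_le _ _
    _ ≤ 1 + 3 := by
        gcongr
        · exact ContinuousLinearMap.norm_id_le
        · exact normShat hn
    _ = 4 := by norm_num

/-- the symmetrized conjugate of `Shat` -/
def Stil (n : ℕ) : Matrix (Fin (n-2)) (Fin (n-2)) ℝ :=
  Matrix.of fun i j => Real.sqrt (p n ((i:ℕ)+2)) * Shat n i j * (Real.sqrt (p n ((j:ℕ)+2)))⁻¹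

section spectral
variable {n : ℕ} (hn : 6 ≤ n)

lemma sq_pos (hn : 6 ≤ n) (i : Fin (n-2)) : 0 < Real.sqrt (p n ((i:ℕ)+2)) :=
  Real.sqrt_pos.mpr (p_pos (by omega) _)

lemma spectrum_Stil (hn : 6 ≤ n) : spectrum ℝ (Stil n) = spectrum ℝ (Shat n) := by
  classical
  set v : Fin (n-2) → ℝ := fun i => Real.sqrt (p n ((i:ℕ)+2)) with hv
  have hvne : ∀ i, v i ≠ 0 := fun i => (sq_pos hn i).ne'
  have hmul : Matrix.diagonal v * Matrix.diagonal (fun i => (v i)⁻¹)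
      = (1 : Matrix (Fin (n-2)) (Fin (n-2)) ℝ) := by
    rw [Matrix.diagonal_mul_diagonal]
    convert Matrix.diagonal_one using 2
    exact funext fun i => mul_inv_cancel₀ (hvne i)
  have hmul' : Matrix.diagonal (fun i => (v i)⁻¹) * Matrix.diagonal v
      = (1 : Matrix (Fin (n-2)) (Fin (n-2)) ℝ) := by
    rw [Matrix.diagonal_mul_diagonal]
    convert Matrix.diagonal_one using 2
    exact funext fun i => inv_mul_cancel₀ (hvne i)
  set U : (Matrix (Fin (n-2)) (Fin (n-2)) ℝ)ˣ :=
    ⟨Matrix.diagonal v, Matrix.diagonal (fun i => (v i)⁻¹), hmul, hmul'⟩ with hU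
  have key : Stil n = (↑U : Matrix (Fin (n-2)) (Fin (n-2)) ℝ) * Shat n
      * (↑U⁻¹ : Matrix (Fin (n-2)) (Fin (n-2)) ℝ) := by
    ext i j
    simp [Stil, hU, hv, Units.inv_mk, Units.val_mk, Matrix.mul_diagonal, Matrix.diagonal_mul]
  rw [key, spectrum.units_conjugate]

lemma Stil_herm (hn : 6 ≤ n) : (Stil n).IsHermitian := by
  have P := p_pos (by omega : 1 ≤ n)
  apply Matrix.IsHermitian.ext
  intro i j
  rw [star_trivial]
  simp only [Stil, Matrix.of_apply]
  have hvi : Real.sqrt (p n ((i:ℕ)+2)) ≠ 0 := (sq_pos hn i).ne'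
  have hvj : Real.sqrt (p n ((j:ℕ)+2)) ≠ 0 := (sq_pos hn j).ne'
  have hvi2 : Real.sqrt (p n ((i:ℕ)+2)) * Real.sqrt (p n ((i:ℕ)+2)) = p n ((i:ℕ)+2) :=
    Real.mul_self_sqrt (P _).le
  have hvj2 : Real.sqrt (p n ((j:ℕ)+2)) * Real.sqrt (p n ((j:ℕ)+2)) = p n ((j:ℕ)+2) :=
    Real.mul_self_sqrt (P _).le
  have hdb : p n ((j:ℕ)+2) * Pmat n ((j:ℕ)+2) ((i:ℕ)+2)
      = p n ((i:ℕ)+2) * Pmat n ((i:ℕ)+2) ((j:ℕ)+2) := db (by omega) _ _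
  show Real.sqrt (p n ((j:ℕ)+2)) * Shat n j i * (Real.sqrt (p n ((i:ℕ)+2)))⁻¹
      = Real.sqrt (p n ((i:ℕ)+2)) * Shat n i j * (Real.sqrt (p n ((j:ℕ)+2)))⁻¹
  unfold Shat
  field_simp
  linear_combination Pmat n ((j:ℕ)+2) ((i:ℕ)+2) * hvj2 - Pmat n ((i:ℕ)+2) ((j:ℕ)+2) * hvi2 + hdb
end spectral

section spectral2
variable {n : ℕ}

lemma trace_Stil (hn : 6 ≤ n) :
    Matrix.trace (Stil n) = ∑ i : Fin (n-2), Pmat n ((i:ℕ)+2) ((i:ℕ)+2) := by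
  unfold Matrix.trace
  refine Finset.sum_congr rfl (fun i _ => ?_)
  have hvi : Real.sqrt (p n ((i:ℕ)+2)) ≠ 0 := (sq_pos hn i).ne'
  show Real.sqrt (p n ((i:ℕ)+2)) * Shat n i i * (Real.sqrt (p n ((i:ℕ)+2)))⁻¹ = _
  rw [mul_comm (Real.sqrt (p n ((i:ℕ)+2))) (Shat n i i), mul_assoc,
    mul_inv_cancel₀ hvi, mul_one]
  rfl

lemma trace_bound (hn : 6 ≤ n) :
    Matrix.trace (Stil n) ≤ ((n-2 : ℕ) : ℝ)/2 + 1/2 := by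
  rw [trace_Stil hn]
  have h1 : ∀ i : Fin (n-2), Pmat n ((i:ℕ)+2) ((i:ℕ)+2)
      = 1/2 + (g n ((i:ℕ)+1) - g n ((i:ℕ)+2))/2 := by
    intro i
    have hi := i.isLt
    have := Pmat_diag_s19 (n := n) ((i:ℕ)+2) (by omega) (by omega)
    simpa using this
  rw [Finset.sum_congr rfl (fun i _ => h1 i), Finset.sum_add_distrib,
    Finset.sum_const, Finset.card_univ, Fintype.card_fin]
  have h2 : ∑ i : Fin (n-2), (g n ((i:ℕ)+1) - g n ((i:ℕ)+2))/2
      = (g n 1 - g n ((n-2)+1))/2 := by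
    rw [← Finset.sum_div]
    congr 1
    rw [Fin.sum_univ_eq_sum_range (fun k => g n (k+1) - g n (k+2))]
    exact Finset.sum_range_sub' (fun k => g n (k+1)) (n-2)
  rw [h2]
  have hg1 := g_mem (by omega : 1 ≤ n) 1
  have hg2 := g_mem (by omega : 1 ≤ n) ((n-2)+1)
  have : (n - 2 : ℕ) • (1/2 : ℝ) = ((n-2 : ℕ) : ℝ)/2 := by
    rw [nsmul_eq_mul]; ring
  rw [this]
  linarith [hg1.1, hg1.2, hg2.1, hg2.2]

lemma exists_eig (hn : 6 ≤ n) : ∃ lam ∈ spectrum ℝ (Shat n), lam ≤ (0.64 : ℝ) := by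
  haveI : Nonempty (Fin (n-2)) := ⟨⟨0, by omega⟩⟩
  have hherm := Stil_herm hn
  have hsum : ∑ i, hherm.eigenvalues i = Matrix.trace (Stil n) := by
    have h := hherm.spectral_theorem
    calc ∑ i, hherm.eigenvalues i
        = Matrix.trace (Matrix.diagonal (RCLike.ofReal ∘ hherm.eigenvalues)) := by
          rw [Matrix.trace_diagonal]
          simp [RCLike.ofReal_real_eq_id]
      _ = Matrix.trace ((star (hherm.eigenvectorUnitary : Matrix (Fin (n-2)) (Fin (n-2)) ℝ)
            * (hherm.eigenvectorUnitary : Matrix (Fin (n-2)) (Fin (n-2)) ℝ))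
            * Matrix.diagonal (RCLike.ofReal ∘ hherm.eigenvalues)) := by
          rw [Unitary.coe_star_mul_self, one_mul]
      _ = Matrix.trace ((hherm.eigenvectorUnitary : Matrix (Fin (n-2)) (Fin (n-2)) ℝ)
            * Matrix.diagonal (RCLike.ofReal ∘ hherm.eigenvalues)
            * star (hherm.eigenvectorUnitary : Matrix (Fin (n-2)) (Fin (n-2)) ℝ)) :=
          (Matrix.trace_mul_cycle _ _ _).symm
      _ = Matrix.trace (Stil n) := (congrArg Matrix.trace h).symm
  have hcmp : ∑ i, hherm.eigenvalues i ≤ ∑ _i : Fin (n-2), (0.64 : ℝ) := by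
    rw [Finset.sum_const, Finset.card_univ, Fintype.card_fin, nsmul_eq_mul]
    have h4 : (4:ℝ) ≤ ((n-2:ℕ):ℝ) := by exact_mod_cast (by omega : 4 ≤ n-2)
    have := trace_bound hn
    nlinarith
  obtain ⟨i0, _, hi0⟩ := Finset.exists_le_of_sum_le Finset.univ_nonempty hcmp
  exact ⟨hherm.eigenvalues i0,
    (spectrum_Stil hn) ▸ hherm.eigenvalues_mem_spectrum_real i0, hi0⟩

lemma sInf_ub (hn : 6 ≤ n) : sInf (spectrum ℝ (Shat n)) ≤ (0.64 : ℝ) := by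
  haveI : Nonempty (Fin (n-2)) := ⟨⟨0, by omega⟩⟩
  have hherm := Stil_herm hn
  have sr : spectrum ℝ (Shat n) = Set.range hherm.eigenvalues := by
    rw [← spectrum_Stil hn, hherm.spectrum_real_eq_range_eigenvalues]
  obtain ⟨lam, hmem, hlam⟩ := exists_eig hn
  have hbdd : BddBelow (spectrum ℝ (Shat n)) := sr ▸ (Set.finite_range _).bddBelow
  exact le_trans (csInf_le hbdd hmem) hlam

lemma sInf_lb (hn : 6 ≤ n) : (-4 : ℝ) ≤ sInf (spectrum ℝ (Shat n)) := by
  haveI : Nonempty (Fin (n-2)) := ⟨⟨0, by omega⟩⟩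
  have hherm := Stil_herm hn
  have sr : spectrum ℝ (Shat n) = Set.range hherm.eigenvalues := by
    rw [← spectrum_Stil hn, hherm.spectrum_real_eq_range_eigenvalues]
  have hne : (spectrum ℝ (Shat n)).Nonempty := sr ▸ Set.range_nonempty _
  refine le_csInf hne (fun x hx => ?_)
  have hx' : x ∈ spectrum ℝ (Matrix.toEuclideanCLM (𝕜 := ℝ) (Shat n)) := by
    rwa [AlgEquiv.spectrum_eq]
  have h1 := spectrum.norm_le_norm_mul_of_mem hx'
  have h2 : ‖(1 : EuclideanSpace ℝ (Fin (n-2)) →L[ℝ] EuclideanSpace ℝ (Fin (n-2)))‖ ≤ 1 :=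
    ContinuousLinearMap.norm_id_le
  have h3 := normShat hn
  have habs : |x| ≤ 3 := by
    calc |x| = ‖x‖ := (Real.norm_eq_abs x).symm
      _ ≤ ‖Matrix.toEuclideanCLM (𝕜 := ℝ) (Shat n)‖ * ‖(1 : EuclideanSpace ℝ (Fin (n-2)) →L[ℝ] EuclideanSpace ℝ (Fin (n-2)))‖ := h1
      _ ≤ 3 * 1 := by
          apply mul_le_mul h3 h2 (norm_nonneg _) (by norm_num)
      _ = 3 := by norm_num
  have := abs_le.mp habs
  linarith [this.1]

lemma norm_lb (hn : 6 ≤ n) :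
    (0.36 : ℝ) ≤ ‖Matrix.toEuclideanCLM (𝕜 := ℝ)
      ((1 : Matrix (Fin (n-2)) (Fin (n-2)) ℝ) - Shat n)‖ := by
  obtain ⟨lam, hmem, hlam⟩ := exists_eig hn
  have h1 : (1 : ℝ) - lam ∈ spectrum ℝ ((1 : Matrix (Fin (n-2)) (Fin (n-2)) ℝ) - Shat n) := by
    rw [spectrum.mem_iff] at hmem ⊢
    intro hcon
    apply hmem
    have heq : algebraMap ℝ (Matrix (Fin (n-2)) (Fin (n-2)) ℝ) (1 - lam)
        - ((1 : Matrix (Fin (n-2)) (Fin (n-2)) ℝ) - Shat n)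
        = -(algebraMap ℝ (Matrix (Fin (n-2)) (Fin (n-2)) ℝ) lam - Shat n) := by
      rw [map_sub, map_one]; abel
    rw [heq] at hcon
    simpa using hcon.neg
  have hx' : (1 : ℝ) - lam ∈ spectrum ℝ (Matrix.toEuclideanCLM (𝕜 := ℝ)
      ((1 : Matrix (Fin (n-2)) (Fin (n-2)) ℝ) - Shat n)) := by
    rwa [AlgEquiv.spectrum_eq]
  have h2 := spectrum.norm_le_norm_mul_of_mem hx'
  have h3 : ‖(1 : EuclideanSpace ℝ (Fin (n-2)) →L[ℝ] EuclideanSpace ℝ (Fin (n-2)))‖ ≤ 1 :=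
    ContinuousLinearMap.norm_id_le
  have h4 : (0.36 : ℝ) ≤ ‖(1:ℝ) - lam‖ := by
    rw [Real.norm_eq_abs]
    have : (0.36 : ℝ) ≤ 1 - lam := by linarith
    exact le_trans this (le_abs_self _)
  have h5 : (0 : ℝ) ≤ ‖Matrix.toEuclideanCLM (𝕜 := ℝ)
      ((1 : Matrix (Fin (n-2)) (Fin (n-2)) ℝ) - Shat n)‖ := norm_nonneg _
  nlinarith [h2, h4, h3, h5, norm_nonneg ((1:ℝ) - lam)]

end spectral2

/-- Appendix B of the paper: the smallest eigenvalue of the interior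
submatrix satisfies `limsup_n λ_min(Ŝ^{(n)}) ≤ 0.64`, hence
`liminf_n ‖I - Ŝ^{(n)}‖₂ ≥ 0.36` for the spectral norm. -/
theorem stmt19 :
    limsup (fun n : ℕ => sInf (spectrum ℝ (Shat n))) atTop ≤ (0.64 : ℝ) ∧
    (0.36 : ℝ) ≤ liminf (fun n : ℕ =>
      ‖Matrix.toEuclideanCLM (𝕜 := ℝ)
        ((1 : Matrix (Fin (n - 2)) (Fin (n - 2)) ℝ) - Shat n)‖) atTop := by
  constructor
  · apply Filter.limsup_le_of_le
    · exact Filter.isCoboundedUnder_le_of_eventually_le atTop (x := (-4 : ℝ))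
        ((eventually_ge_atTop 6).mono fun n hn => sInf_lb hn)
    · exact (eventually_ge_atTop 6).mono fun n hn => sInf_ub hn
  · apply Filter.le_liminf_of_le
    · exact Filter.isCoboundedUnder_ge_of_eventually_le atTop (x := (4 : ℝ))
        ((eventually_ge_atTop 6).mono fun n hn => normOneSub hn)
    · exact (eventually_ge_atTop 6).mono fun n hn => norm_lb hn

end RareChain
end
end
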